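/- arXiv:math/0301239 — 5 statements merged into one kernel-verified Lean document; each statement's English description precedes it below -/
import Mathlib

section
/- Let n ≥ 3, s > 0, and p ∈ R^n \ {0}, and set y = ((2-n)s/|p|²)·p. Let ξ be a C¹ function defined near y with ξ(y) = s and ∇ξ(y) = p. Fix λ > 0 and let ψ(x) = λ²x/|x|² be the inversion. Then the Kelvin transform ξ_ψ(x) := (λ/|x|)^{n-2} ξ(λ²x/|x|²) satisfies ∇ξ_ψ(ψ^{-1}(y)) = 0. -/
open Metric

set_option maxHeartbeats 1000000 in
theorem stmt4 {n : ℕ} (hn : 3 ≤ n) {s : ℝ} (hs : 0 < s)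
    (p : EuclideanSpace ℝ (Fin n)) (hp : p ≠ 0)
    (y : EuclideanSpace ℝ (Fin n)) (hy : y = (((2 - (n : ℝ)) * s) / ‖p‖ ^ 2) • p)
    (ξ : EuclideanSpace ℝ (Fin n) → ℝ)
    (hξ : ContDiffAt ℝ 1 ξ y) (hξy : ξ y = s) (hξgrad : gradient ξ y = p)
    {lam : ℝ} (hlam : 0 < lam) :
    gradient (fun x => (lam / ‖x‖) ^ (n - 2) * ξ ((lam ^ 2 / ‖x‖ ^ 2) • x))
      ((lam ^ 2 / ‖y‖ ^ 2) • y) = 0 := by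
  have hn3 : (3:ℝ) ≤ (n:ℝ) := by exact_mod_cast hn
  have hpn : (0:ℝ) < ‖p‖ := norm_pos_iff.mpr hp
  set c : ℝ := ((2 - (n : ℝ)) * s) / ‖p‖ ^ 2 with hc
  have hcneg : c < 0 := div_neg_of_neg_of_pos (by nlinarith) (by positivity)
  have hc0 : c ≠ 0 := ne_of_lt hcneg
  set μ : ℝ := lam ^ 2 / (c * ‖p‖ ^ 2) with hμ
  have hμ0 : μ ≠ 0 := div_ne_zero (by positivity) (mul_ne_zero hc0 (by positivity))
  have hy2 : ‖y‖ ^ 2 = c ^ 2 * ‖p‖ ^ 2 := by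
    rw [hy, norm_smul, mul_pow, Real.norm_eq_abs, sq_abs]
  have hcp : c * ‖p‖ ^ 2 = (2 - (n:ℝ)) * s := by
    rw [hc, div_mul_cancel₀ _ (pow_ne_zero _ hpn.ne')]
  have hzp : (lam ^ 2 / ‖y‖ ^ 2) • y = μ • p := by
    rw [hy2, hy, smul_smul, hμ]
    congr 1
    field_simp
  set z : EuclideanSpace ℝ (Fin n) := μ • p with hzdef
  have hz0 : z ≠ 0 := smul_ne_zero hμ0 hp
  have hrpos : (0:ℝ) < ‖z‖ := norm_pos_iff.mpr hz0
  have hr0 : ‖z‖ ≠ 0 := ne_of_gt hrpos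
  have hr2 : (‖z‖:ℝ) ^ 2 ≠ 0 := pow_ne_zero _ hr0
  have hz2 : ‖z‖ ^ 2 = μ ^ 2 * ‖p‖ ^ 2 := by
    rw [hzdef, norm_smul, mul_pow, Real.norm_eq_abs, sq_abs]
  have hkey : μ * (((n:ℝ) - 2) * s) = -lam ^ 2 := by
    rw [hμ, hcp]
    have h2n : (2 - (n:ℝ)) * s ≠ 0 := by nlinarith
    rw [div_mul_eq_mul_div, div_eq_iff h2n]
    ring
  have hgz : (lam ^ 2 / ‖z‖ ^ 2) • z = y := by
    rw [hz2, hy, hzdef, smul_smul]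
    congr 1
    rw [hμ]
    field_simp
  -- derivative of ξ
  have Hξ' : HasFDerivAt ξ (InnerProductSpace.toDual ℝ (EuclideanSpace ℝ (Fin n)) p) y := by
    have hd := (hξ.differentiableAt one_ne_zero).hasGradientAt
    rw [hξgrad] at hd
    exact hd.hasFDerivAt
  -- derivative of ‖x‖ ^ 2
  have Hq : HasFDerivAt (fun x : EuclideanSpace ℝ (Fin n) => ‖x‖ ^ 2)
      (2 • (innerSL ℝ z)) z := (hasStrictFDerivAt_norm_sq z).hasFDerivAt
  -- derivative of the norm
  have Hn1 : HasFDerivAt (fun x : EuclideanSpace ℝ (Fin n) => ‖x‖)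
      ((1 / (2 * ‖z‖)) • (2 • (innerSL ℝ z))) z := by
    have h1 := (Real.hasDerivAt_sqrt hr2).comp_hasFDerivAt z Hq
    have hfun : (Real.sqrt ∘ fun x : EuclideanSpace ℝ (Fin n) => ‖x‖ ^ 2)
        = fun x : EuclideanSpace ℝ (Fin n) => ‖x‖ := by
      funext x
      simp [Function.comp, Real.sqrt_sq (norm_nonneg x)]
    rw [hfun, Real.sqrt_sq (norm_nonneg z)] at h1
    exact h1
  -- derivative of the Kelvin prefactor
  have Hd1 : HasDerivAt (fun t : ℝ => (lam * t⁻¹) ^ (n - 2))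
      ((↑(n - 2) : ℝ) * (lam * ‖z‖⁻¹) ^ (n - 2 - 1) * (lam * -(‖z‖ ^ 2)⁻¹)) ‖z‖ :=
    ((hasDerivAt_inv hr0).const_mul lam).pow (n - 2)
  have Hh : HasFDerivAt (fun x : EuclideanSpace ℝ (Fin n) => (lam / ‖x‖) ^ (n - 2))
      (((↑(n - 2) : ℝ) * (lam * ‖z‖⁻¹) ^ (n - 2 - 1) * (lam * -(‖z‖ ^ 2)⁻¹))
        • ((1 / (2 * ‖z‖)) • (2 • (innerSL ℝ z)))) z := by
    have h1 := Hd1.comp_hasFDerivAt z Hn1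
    have hfun : ((fun t : ℝ => (lam * t⁻¹) ^ (n - 2)) ∘ fun x : EuclideanSpace ℝ (Fin n) => ‖x‖)
        = fun x : EuclideanSpace ℝ (Fin n) => (lam / ‖x‖) ^ (n - 2) := by
      funext x
      simp [Function.comp, div_eq_mul_inv]
    rwa [hfun] at h1
  -- derivative of the inversion coefficient
  have Hc1 : HasDerivAt (fun t : ℝ => lam ^ 2 * t⁻¹) (lam ^ 2 * -((‖z‖ ^ 2) ^ 2)⁻¹) (‖z‖ ^ 2) :=
    (hasDerivAt_inv hr2).const_mul (lam ^ 2)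
  have Hc : HasFDerivAt (fun x : EuclideanSpace ℝ (Fin n) => lam ^ 2 / ‖x‖ ^ 2)
      ((lam ^ 2 * -((‖z‖ ^ 2) ^ 2)⁻¹) • (2 • (innerSL ℝ z))) z := by
    have h1 := Hc1.comp_hasFDerivAt z Hq
    have hfun : ((fun t : ℝ => lam ^ 2 * t⁻¹) ∘ fun x : EuclideanSpace ℝ (Fin n) => ‖x‖ ^ 2)
        = fun x : EuclideanSpace ℝ (Fin n) => lam ^ 2 / ‖x‖ ^ 2 := by
      funext x
      simp [Function.comp, div_eq_mul_inv]
    rwa [hfun] at h1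
  -- derivative of the inversion
  have Hg : HasFDerivAt (fun x : EuclideanSpace ℝ (Fin n) => (lam ^ 2 / ‖x‖ ^ 2) • x)
      ((lam ^ 2 / ‖z‖ ^ 2) • ContinuousLinearMap.id ℝ (EuclideanSpace ℝ (Fin n))
        + ((lam ^ 2 * -((‖z‖ ^ 2) ^ 2)⁻¹) • (2 • (innerSL ℝ z))).smulRight z) z :=
    Hc.smul (hasFDerivAt_id z)
  have Hξ'' : HasFDerivAt ξ (InnerProductSpace.toDual ℝ (EuclideanSpace ℝ (Fin n)) p)
      ((fun x : EuclideanSpace ℝ (Fin n) => (lam ^ 2 / ‖x‖ ^ 2) • x) z) := by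
    simpa [hgz] using Hξ'
  have Hcomp := HasFDerivAt.comp
    (f := fun x : EuclideanSpace ℝ (Fin n) => (lam ^ 2 / ‖x‖ ^ 2) • x) z Hξ'' Hg
  have Hfull := Hh.mul Hcomp
  have Hzero : HasFDerivAt
      (fun x : EuclideanSpace ℝ (Fin n) => (lam / ‖x‖) ^ (n - 2) * ξ ((lam ^ 2 / ‖x‖ ^ 2) • x))
      (0 : EuclideanSpace ℝ (Fin n) →L[ℝ] ℝ) z := by
    refine Hfull.congr_fderiv ?_
    symm
    ext v
    simp only [ContinuousLinearMap.zero_apply, ContinuousLinearMap.add_apply,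
      ContinuousLinearMap.coe_smul', Pi.smul_apply, ContinuousLinearMap.comp_apply,
      ContinuousLinearMap.smulRight_apply, ContinuousLinearMap.id_apply,
      innerSL_apply_apply, InnerProductSpace.toDual_apply_apply, smul_eq_mul, Function.comp_apply,
      ContinuousLinearMap.coe_id', id_eq, map_add, map_smul, inner_add_right,
      real_inner_smul_right]
    simp only [nsmul_eq_mul, Nat.cast_ofNat]
    rw [hgz, hξy]
    have hzv : (inner ℝ z v : ℝ) = μ * inner ℝ p v := by
      rw [hzdef]; exact real_inner_smul_left p v μ
    have hpz : (inner ℝ p z : ℝ) = μ * ‖p‖ ^ 2 := by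
      rw [hzdef, real_inner_smul_right, real_inner_self_eq_norm_sq]
    have hcast : ((n - 2 : ℕ) : ℝ) = (n : ℝ) - 2 := by
      rw [Nat.cast_sub (by omega)]; norm_num
    have hexp : n - 2 - 1 = n - 3 := by omega
    have hsplit : (lam / ‖z‖) ^ (n - 2) = (lam / ‖z‖) ^ (n - 3) * (lam / ‖z‖) := by
      rw [← pow_succ]; congr 1; omega
    rw [hzv, hpz, hcast, hexp, hsplit, div_eq_mul_inv lam]
    set P := (inner ℝ p v : ℝ) with hP
    set a := (lam * ‖z‖⁻¹) ^ (n - 3) with ha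
    clear_value P a z μ c
    field_simp
    linear_combination (a * lam * P * ‖z‖ ^ 2) * hkey - (2 * a * lam ^ 3 * P) * hz2
  rw [hzp]
  have h0 := Hzero.hasGradientAt.gradient
  simpa using h0
end

section
/- Let n ≥ 3, let u : R^n \ {0} → (0,∞) be continuous, and let μ > 0, e ∈ R^n with |e| = 1. Suppose that for every x ∈ R^n \ {0} and every 0 < λ < |x|, u_{x,λ}(y) ≤ u(y) for all y ≠ 0 with |y-x| ≥ λ. Then for every y in the half-space Σ_μ(e) = {y : y·e < μ} with y ≠ 0, one has u(y^{e,μ}) ≤ u(y), where y^{e,μ} is the reflection of y across the hyperplane {x : x·e = μ}. -/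
open Metric RealInnerProductSpace Filter Topology

theorem stmt6 {n : ℕ} (hn : 3 ≤ n) (u : EuclideanSpace ℝ (Fin n) → ℝ)
    (huc : ContinuousOn u {(0 : EuclideanSpace ℝ (Fin n))}ᶜ)
    (hupos : ∀ x : EuclideanSpace ℝ (Fin n), x ≠ 0 → 0 < u x)
    (hms : ∀ x : EuclideanSpace ℝ (Fin n), x ≠ 0 → ∀ lam : ℝ, 0 < lam → lam < ‖x‖ →
      ∀ y : EuclideanSpace ℝ (Fin n), y ≠ 0 → lam ≤ ‖y - x‖ →
        (lam / ‖y - x‖) ^ (n - 2) * u (x + (lam ^ 2 / ‖y - x‖ ^ 2) • (y - x)) ≤ u y)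
    (μ : ℝ) (hμ : 0 < μ) (e : EuclideanSpace ℝ (Fin n)) (he : ‖e‖ = 1) :
    ∀ y : EuclideanSpace ℝ (Fin n), y ≠ 0 → ⟪y, e⟫ < μ →
      u (y + (2 * (μ - ⟪y, e⟫)) • e) ≤ u y := by
  intro y hy hyt
  set t : ℝ := ⟪y, e⟫ with ht
  set z : EuclideanSpace ℝ (Fin n) := y + (2 * (μ - t)) • e with hz
  have hee : ⟪e, e⟫ = (1:ℝ) := by
    rw [real_inner_self_eq_norm_sq, he]; norm_num
  have hzne : z ≠ 0 := by
    intro h0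
    have h1 : ⟪y + (2*(μ - t)) • e, e⟫ = (0:ℝ) := by rw [← hz, h0, inner_zero_left]
    rw [inner_add_left, real_inner_smul_left, hee] at h1
    have : t = 2 * μ := by linarith
    linarith
  -- auxiliary functions
  set N : ℝ → ℝ := fun R => ‖R⁻¹ • y - e‖ with hN
  set g : ℝ → EuclideanSpace ℝ (Fin n) :=
    fun R => R • e + (((R - μ) ^ 2) / ‖y - R • e‖ ^ 2) • (y - R • e) with hg
  set h : ℝ → ℝ := fun R => (R - μ) / ‖y - R • e‖ with hh
  set ψ : ℝ → ℝ := fun R => ((‖y‖ ^ 2 - μ ^ 2) / R + 2 * (μ - t)) / (N R) ^ 2 with hψ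
  -- lower bound on distance
  have hle : ∀ R : ℝ, R - t ≤ ‖y - R • e‖ := by
    intro R
    have h1 : ⟪R • e - y, e⟫ ≤ ‖R • e - y‖ * ‖e‖ := real_inner_le_norm _ _
    rw [inner_sub_left, real_inner_smul_left, hee, he, mul_one, norm_sub_rev] at h1
    linarith [h1]
  have hDpos : ∀ᶠ R in atTop, (0:ℝ) < R ∧ μ < R ∧ R - μ < ‖y - R • e‖ := by
    filter_upwards [eventually_gt_atTop (max 0 μ)] with R hR
    have h0 : 0 < R := lt_of_le_of_lt (le_max_left _ _) hR
    have h1 : μ < R := lt_of_le_of_lt (le_max_right _ _) hR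
    exact ⟨h0, h1, lt_of_lt_of_le (by linarith) (hle R)⟩
  -- norm of R • e
  have hnorm : ∀ R : ℝ, 0 < R → ‖R • e‖ = R := by
    intro R hR
    rw [norm_smul, he, mul_one, Real.norm_eq_abs, abs_of_pos hR]
  -- eventual inequality from hms
  have hev : ∀ᶠ R in atTop, (h R) ^ (n - 2) * u (g R) ≤ u y := by
    filter_upwards [hDpos] with R ⟨h0, h1, h2⟩
    have hxne : R • e ≠ 0 := by
      intro hc
      have := hnorm R h0
      rw [hc, norm_zero] at this
      linarith
    exact hms (R • e) hxne (R - μ) (by linarith) (by rw [hnorm R h0]; linarith)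
      y hy h2.le
  -- Tendsto N atTop (𝓝 1)
  have hNt : Filter.Tendsto N atTop (𝓝 1) := by
    have h1 : Filter.Tendsto (fun R : ℝ => R⁻¹ • y - e) atTop (𝓝 ((0:ℝ) • y - e)) :=
      (tendsto_inv_atTop_zero.smul_const y).sub_const e
    have h2 := (continuous_norm.tendsto _).comp h1
    simpa [hN, zero_sub, he, Function.comp_def] using h2
  -- relation ‖y - R•e‖ = R * N R for R > 0
  have hDN : ∀ R : ℝ, 0 < R → ‖y - R • e‖ = R * N R := by
    intro R hR
    have : R⁻¹ • (y - R • e) = R⁻¹ • y - e := by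
      rw [smul_sub, inv_smul_smul₀ hR.ne']
    have h1 : N R = R⁻¹ * ‖y - R • e‖ := by
      rw [hN]
      simp only
      rw [← this, norm_smul, Real.norm_eq_abs, abs_inv, abs_of_pos hR]
    rw [h1]
    field_simp
  -- Tendsto h atTop (𝓝 1)
  have hht : Filter.Tendsto h atTop (𝓝 1) := by
    have heq : ∀ᶠ R in atTop, h R = (1 - μ / R) / N R := by
      filter_upwards [eventually_gt_atTop (0:ℝ)] with R hR
      rw [hh]
      simp only
      rw [hDN R hR]
      field_simp
    have h1 : Filter.Tendsto (fun R : ℝ => (1 - μ / R) / N R) atTop (𝓝 ((1 - 0) / 1)) :=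
      (tendsto_const_nhds.sub (tendsto_const_nhds.div_atTop tendsto_id)).div hNt one_ne_zero
    rw [Filter.tendsto_congr' heq]
    simpa using h1
  -- Tendsto ψ atTop (𝓝 (2 * (μ - t)))
  have hψt : Filter.Tendsto ψ atTop (𝓝 (2 * (μ - t))) := by
    have h1 : Filter.Tendsto (fun R : ℝ => (‖y‖ ^ 2 - μ ^ 2) / R + 2 * (μ - t)) atTop
        (𝓝 (0 + 2 * (μ - t))) :=
      (tendsto_const_nhds.div_atTop tendsto_id).add tendsto_const_nhds
    have h2 : Filter.Tendsto (fun R => (N R) ^ 2) atTop (𝓝 (1 ^ 2)) := hNt.pow 2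
    have := h1.div h2 (by norm_num : (1:ℝ)^2 ≠ 0)
    simpa [hψ, Pi.div_def] using this
  -- norm expansion
  have hD2 : ∀ R : ℝ, 0 < R → ‖y - R • e‖ ^ 2 = ‖y‖ ^ 2 - 2 * R * t + R ^ 2 := by
    intro R hR
    rw [@norm_sub_sq_real]
    rw [real_inner_smul_right, hnorm R hR, ht]
    ring
  -- g eventually equals h² • y + ψ • e
  have hgeq : ∀ᶠ R in atTop, g R = (h R) ^ 2 • y + (ψ R) • e := by
    filter_upwards [hDpos] with R ⟨h0, h1, h2⟩
    have hD0 : (0:ℝ) < ‖y - R • e‖ := by linarith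
    have hN0 : N R ≠ 0 := by
      intro hc
      rw [hDN R h0, hc, mul_zero] at hD0
      exact lt_irrefl 0 hD0
    have hc : ((R - μ) ^ 2) / ‖y - R • e‖ ^ 2 = (h R) ^ 2 := by
      rw [hh]; simp only; rw [div_pow]
    have hrc : R - (((R - μ) ^ 2) / ‖y - R • e‖ ^ 2) * R = ψ R := by
      rw [hψ]
      simp only
      have hNR : N R = ‖y - R • e‖ / R := by
        rw [hDN R h0]; field_simp
      have hQ : (0:ℝ) < ‖y‖ ^ 2 - 2 * R * t + R ^ 2 := by
        rw [← hD2 R h0]; positivity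
      rw [hNR, div_pow, hD2 R h0]
      field_simp [hQ.ne', h0.ne']
      have hQi : (‖y‖ ^ 2 - 2 * R * t + R ^ 2) * (‖y‖ ^ 2 - 2 * R * t + R ^ 2)⁻¹ = 1 :=
        mul_inv_cancel₀ hQ.ne'
      linear_combination -hQi
    rw [hg]
    simp only
    rw [smul_sub, hc]
    rw [← hrc]
    module
  -- Tendsto g atTop (𝓝 z)
  have hgt : Filter.Tendsto g atTop (𝓝 z) := by
    have h1 : Filter.Tendsto (fun R => (h R) ^ 2 • y + (ψ R) • e) atTop
        (𝓝 (((1:ℝ) ^ 2) • y + (2 * (μ - t)) • e)) :=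
      ((hht.pow 2).smul_const y).add (hψt.smul_const e)
    rw [Filter.tendsto_congr' hgeq]
    simpa [hz] using h1
  -- continuity of u at z
  have hcu : ContinuousAt u z := huc.continuousAt (isOpen_compl_singleton.mem_nhds hzne)
  have hut : Filter.Tendsto (fun R => u (g R)) atTop (𝓝 (u z)) := hcu.tendsto.comp hgt
  have hft : Filter.Tendsto (fun R => (h R) ^ (n - 2) * u (g R)) atTop (𝓝 (u z)) := by
    have h1 : Filter.Tendsto (fun R => (h R) ^ (n - 2)) atTop (𝓝 (1 ^ (n - 2))) :=
      hht.pow (n - 2)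
    have := h1.mul hut
    simpa using this
  exact le_of_tendsto hft hev
end

section
/- Let n ≥ 3 and let u : R^n \ {0} → R be continuous. Suppose that for every unit vector e ∈ R^n and every μ > 0, u(y^{e,μ}) ≤ u(y) for all y ∈ Σ_μ(e) \ {0}, where Σ_μ(e) = {y : y·e < μ} and y^{e,μ} is the reflection of y across ∂Σ_μ(e). Then u is radially symmetric: u(x) = u(y) whenever |x| = |y| > 0. -/
open Metric RealInnerProductSpace Filter Topology

private lemma aux7 {n : ℕ} (u : EuclideanSpace ℝ (Fin n) → ℝ)
    (huc : ContinuousOn u {(0 : EuclideanSpace ℝ (Fin n))}ᶜ)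
    (hrefl : ∀ e : EuclideanSpace ℝ (Fin n), ‖e‖ = 1 → ∀ μ : ℝ, 0 < μ →
      ∀ y : EuclideanSpace ℝ (Fin n), y ≠ 0 → ⟪y, e⟫ < μ →
        u (y + (2 * (μ - ⟪y, e⟫)) • e) ≤ u y)
    (e : EuclideanSpace ℝ (Fin n)) (he : ‖e‖ = 1)
    (z : EuclideanSpace ℝ (Fin n)) (hz : z ≠ 0) (hze : ⟪z, e⟫ < 0) :
    u (z - (2 * ⟪z, e⟫) • e) ≤ u z := by
  set g : ℝ → EuclideanSpace ℝ (Fin n) := fun μ => z + (2 * (μ - ⟪z, e⟫)) • e with hg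
  have hg0 : g 0 = z - (2 * ⟪z, e⟫) • e := by
    simp [hg, sub_eq_add_neg, ← neg_smul]
  have hgne : ∀ μ : ℝ, 0 ≤ μ → g μ ≠ 0 := by
    intro μ hμ hzero
    have : ⟪g μ, e⟫ = 2 * μ - ⟪z, e⟫ := by
      show ⟪z + (2 * (μ - ⟪z, e⟫)) • e, e⟫ = 2 * μ - ⟪z, e⟫
      rw [inner_add_left, real_inner_smul_left, real_inner_self_eq_norm_sq, he]
      ring
    rw [hzero, inner_zero_left] at this
    linarith
  have hgc : Continuous g := by fun_prop
  have hcont : ContinuousAt (fun μ => u (g μ)) 0 := by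
    have h1 : ContinuousAt u (g 0) :=
      huc.continuousAt (isOpen_compl_singleton.mem_nhds (hgne 0 le_rfl))
    exact h1.comp hgc.continuousAt
  have htend : Tendsto (fun μ => u (g μ)) (𝓝[>] (0:ℝ)) (𝓝 (u (g 0))) :=
    hcont.tendsto.mono_left nhdsWithin_le_nhds
  rw [← hg0]
  refine le_of_tendsto htend ?_
  filter_upwards [self_mem_nhdsWithin] with μ hμ
  exact hrefl e he μ hμ z hz (hze.trans hμ)

theorem stmt7 {n : ℕ} (hn : 3 ≤ n) (u : EuclideanSpace ℝ (Fin n) → ℝ)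
    (huc : ContinuousOn u {(0 : EuclideanSpace ℝ (Fin n))}ᶜ)
    (hrefl : ∀ e : EuclideanSpace ℝ (Fin n), ‖e‖ = 1 → ∀ μ : ℝ, 0 < μ →
      ∀ y : EuclideanSpace ℝ (Fin n), y ≠ 0 → ⟪y, e⟫ < μ →
        u (y + (2 * (μ - ⟪y, e⟫)) • e) ≤ u y) :
    ∀ x y : EuclideanSpace ℝ (Fin n), ‖x‖ = ‖y‖ → x ≠ 0 → u x = u y := by
  intro x y hxy hx
  rcases eq_or_ne x y with rfl | hne
  · rfl
  have hy : y ≠ 0 := by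
    intro h
    apply hx
    rw [← norm_eq_zero, hxy, h, norm_zero]
  set d : ℝ := ‖y - x‖ with hd
  have hdpos : 0 < d := by
    rw [hd, norm_pos_iff, sub_ne_zero]
    exact hne.symm
  set e : EuclideanSpace ℝ (Fin n) := d⁻¹ • (y - x) with he
  have heu : ‖e‖ = 1 := by
    rw [he, norm_smul, norm_inv, Real.norm_eq_abs, abs_of_pos hdpos, ← hd,
      inv_mul_cancel₀ hdpos.ne']
  have hd2 : d ^ 2 = 2 * (‖x‖ ^ 2 - ⟪x, y⟫) := by
    rw [hd, @norm_sub_sq_real, real_inner_comm, ← hxy]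
    ring
  have hxe : ⟪x, e⟫ = -(d / 2) := by
    rw [he, real_inner_smul_right, inner_sub_right, real_inner_self_eq_norm_sq]
    have h' : ⟪x, y⟫ - ‖x‖ ^ 2 = -(d ^ 2 / 2) := by linarith
    rw [h']
    field_simp
  have hye : ⟪y, e⟫ = d / 2 := by
    rw [he, real_inner_smul_right, inner_sub_right, real_inner_self_eq_norm_sq, ← hxy,
      real_inner_comm]
    have h' : ‖x‖ ^ 2 - ⟪x, y⟫ = d ^ 2 / 2 := by linarith
    rw [h']
    field_simp
  have hrx : x - (2 * ⟪x, e⟫) • e = y := by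
    rw [hxe, he, smul_smul]
    have : 2 * -(d / 2) * d⁻¹ = -1 := by field_simp
    rw [this]
    simp
  have hry : y - (2 * ⟪y, -e⟫) • (-e) = x := by
    rw [inner_neg_right, hye, smul_neg, ← neg_smul, he, smul_smul]
    have : -(2 * -(d / 2)) * d⁻¹ = 1 := by field_simp
    rw [this]
    simp
  have h1 : u y ≤ u x := by
    have := aux7 u huc hrefl e heu x hx (by rw [hxe]; linarith)
    rwa [hrx] at this
  have h2 : u x ≤ u y := by
    have := aux7 u huc hrefl (-e) (by rwa [norm_neg]) y hy
      (by rw [inner_neg_right, hye]; linarith)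
    rwa [hry] at this
  linarith
end

section
/- Let n ≥ 3 and let w : R^n → R be a C¹ function such that for every x ∈ R^n and every λ > 0, w_{x,λ}(y) ≤ w(y) for all y with |y - x| ≥ λ, where w_{x,λ}(y) = (λ/|y-x|)^{n-2} w(x + λ²(y-x)/|y-x|²). Then w is constant. -/
open Filter Set Topology

theorem stmt8 {n : ℕ} (hn : 3 ≤ n) (w : EuclideanSpace ℝ (Fin n) → ℝ)
    (hwC1 : ContDiff ℝ 1 w)
    (hms : ∀ x : EuclideanSpace ℝ (Fin n), ∀ lam : ℝ, 0 < lam →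
      ∀ y : EuclideanSpace ℝ (Fin n), lam ≤ ‖y - x‖ →
        (lam / ‖y - x‖) ^ (n - 2) * w (x + (lam ^ 2 / ‖y - x‖ ^ 2) • (y - x)) ≤ w y) :
    ∃ c : ℝ, ∀ x, w x = c := by
  have hdiff : Differentiable ℝ w := hwC1.differentiable one_ne_zero
  -- key inequality
  have key : ∀ (y v : EuclideanSpace ℝ (Fin n)), v ≠ 0 →
      0 ≤ ((n - 2 : ℕ) : ℝ) * w y + 2 * fderiv ℝ w y v := by
    intro y v hv
    set x := y - v with hxdef
    have hyx : y - x = v := by simp [hxdef]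
    set r := ‖v‖ with hrdef
    have hr : 0 < r := norm_pos_iff.mpr hv
    set c : ℝ → EuclideanSpace ℝ (Fin n) := fun t => x + (t ^ 2 / r ^ 2) • v with hcdef
    have hcr : c r = y := by
      simp only [hcdef]
      rw [div_self (by positivity), one_smul, hxdef]
      abel
    have hc : HasDerivAt c ((2 * r / r ^ 2) • v) r := by
      have h1 : HasDerivAt (fun t : ℝ => t ^ 2 / r ^ 2) (2 * r / r ^ 2) r := by
        simpa using (hasDerivAt_pow 2 r).div_const (r ^ 2)
      exact (h1.smul_const v).const_add x
    have hw' : HasFDerivAt w (fderiv ℝ w y) (c r) := by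
      rw [hcr]; exact (hdiff y).hasFDerivAt
    have hwc : HasDerivAt (fun t => w (c t)) (fderiv ℝ w y ((2 * r / r ^ 2) • v)) r :=
      hw'.comp_hasDerivAt r hc
    have hpow : HasDerivAt (fun t : ℝ => t ^ (n - 2)) (((n - 2 : ℕ) : ℝ) * r ^ (n - 3)) r := by
      have := hasDerivAt_pow (n - 2) r
      have h32 : n - 2 - 1 = n - 3 := by omega
      rwa [h32] at this
    have hg : HasDerivAt (fun t => (1 / r ^ (n - 2)) * (t ^ (n - 2) * w (c t)))
        ((1 / r ^ (n - 2)) *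
          (((n - 2 : ℕ) : ℝ) * r ^ (n - 3) * w y +
            r ^ (n - 2) * fderiv ℝ w y ((2 * r / r ^ 2) • v))) r := by
      have := (hpow.mul hwc).const_mul (1 / r ^ (n - 2))
      rwa [hcr] at this
    set g : ℝ → ℝ := fun t => (1 / r ^ (n - 2)) * (t ^ (n - 2) * w (c t)) with hgdef
    set D : ℝ := (1 / r ^ (n - 2)) *
          (((n - 2 : ℕ) : ℝ) * r ^ (n - 3) * w y +
            r ^ (n - 2) * fderiv ℝ w y ((2 * r / r ^ 2) • v)) with hDdef
    -- g t ≤ g r for t in (0, r]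
    have hgr : g r = w y := by
      simp only [hgdef, hcr]
      rw [one_div, inv_mul_eq_div, mul_comm, mul_div_assoc, div_self (by positivity), mul_one]
    have hle : ∀ t ∈ Ioo (0 : ℝ) r, g t ≤ g r := by
      intro t ht
      rw [hgr]
      have := hms x t ht.1 y (by rw [hyx]; exact le_of_lt ht.2)
      rw [hyx] at this
      calc g t = (t / r) ^ (n - 2) * w (x + (t ^ 2 / r ^ 2) • v) := by
            rw [hgdef, div_pow]; ring
        _ ≤ w y := this
    -- derivative at right endpoint of interval where max is attained: D ≥ 0
    have hD : 0 ≤ D := by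
      have htend : Tendsto (slope g r) (𝓝[<] r) (𝓝 D) :=
        (hasDerivAt_iff_tendsto_slope.mp hg).mono_left
          (nhdsWithin_mono r (fun t ht => ne_of_lt ht))
      refine ge_of_tendsto htend ?_
      filter_upwards [Ioo_mem_nhdsLT_of_mem (show r ∈ Ioc (0:ℝ) r from ⟨hr, le_rfl⟩)]
        with t ht
      rw [slope_def_field]
      rw [div_nonneg_iff]
      right
      exact ⟨by linarith [hle t ht], by linarith [ht.2]⟩
    -- unpack D
    have hfsmul : fderiv ℝ w y ((2 * r / r ^ 2) • v) = (2 / r) * fderiv ℝ w y v := by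
      rw [map_smul, smul_eq_mul]
      congr 1
      field_simp
    rw [hDdef, hfsmul] at hD
    have hr2 : (0:ℝ) < r ^ (n - 2) := pow_pos hr _
    have hr3 : (0:ℝ) < r ^ (n - 3) := pow_pos hr _
    have h1 : 0 ≤ ((n - 2 : ℕ) : ℝ) * r ^ (n - 3) * w y + r ^ (n - 2) * (2 / r * fderiv ℝ w y v) := by
      by_contra h
      push_neg at h
      nlinarith [mul_pos (show (0:ℝ) < 1 / r ^ (n-2) by positivity) (neg_pos.mpr h)]
    have hpows : r ^ (n - 2) * (2 / r) = 2 * r ^ (n - 3) := by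
      have hs : n - 2 = (n - 3) + 1 := by omega
      rw [hs, pow_succ]
      field_simp
    have h2 : 0 ≤ r ^ (n - 3) * (((n - 2 : ℕ) : ℝ) * w y + 2 * fderiv ℝ w y v) := by
      calc (0:ℝ) ≤ ((n - 2 : ℕ) : ℝ) * r ^ (n - 3) * w y + r ^ (n - 2) * (2 / r * fderiv ℝ w y v) := h1
        _ = r ^ (n - 3) * (((n - 2 : ℕ) : ℝ) * w y + 2 * fderiv ℝ w y v) := by
            rw [show r ^ (n - 2) * (2 / r * fderiv ℝ w y v) = (r ^ (n-2) * (2/r)) * fderiv ℝ w y v by ring, hpows]; ring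
    by_contra hcon
    push_neg at hcon
    nlinarith
  -- from key, fderiv = 0 everywhere
  have hzero : ∀ y, fderiv ℝ w y = 0 := by
    intro y
    have hnn : ∀ v : EuclideanSpace ℝ (Fin n), v ≠ 0 → 0 ≤ fderiv ℝ w y v := by
      intro v hv
      by_contra h
      push_neg at h
      set a := fderiv ℝ w y v with ha
      set C := ((n - 2 : ℕ) : ℝ) * w y with hC
      have ht : ∀ t : ℝ, 0 < t → 0 ≤ C + 2 * (t * a) := by
        intro t htp
        have := key y (t • v) (smul_ne_zero (ne_of_gt htp) hv)
        rwa [map_smul, smul_eq_mul] at this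
      have := ht ((|C| + 1) / (-2 * a)) (div_pos (by positivity) (by linarith))
      have hane : a ≠ 0 := ne_of_lt h
      have heq : 2 * ((|C| + 1) / (-2 * a) * a) = -(|C| + 1) := by
        field_simp
      have habs : C ≤ |C| := le_abs_self C
      linarith
    ext v
    simp only [ContinuousLinearMap.zero_apply]
    rcases eq_or_ne v 0 with rfl | hv
    · simp
    · have h1 := hnn v hv
      have h2 := hnn (-v) (neg_ne_zero.mpr hv)
      rw [map_neg] at h2
      linarith
  exact ⟨w 0, fun x => is_const_of_fderiv_eq_zero hdiff hzero x 0⟩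
end

section
/- Let n ≥ 3, a > 0, b ≥ 0, x̄ ∈ R^n, and let u(x) = (a/(1 + b²|x - x̄|²))^{(n-2)/2}. Then the conformal Hessian satisfies A^u(x) = 2b²a^{-2} I for all x ∈ R^n. -/
lemma aux13 (r aR b Q S yi yj e Za P1 X P2 P3 Zb Pn nR : ℝ)
    (hr : r ≠ 0) (ha : aR ≠ 0)
    (hP1 : P1 ≠ 0) (hX : X ≠ 0) (hP2 : P2 ≠ 0) (hPn : Pn ≠ 0) (hQ0 : Q ≠ 0)
    (hnR : nR = 2*r + 2)
    (hQ : Q = 1 + b^2 * S)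
    (h1 : Za * P1 * (X * P2) * aR^2 = Q)
    (h2 : Za * P1 * (X * P3) * aR^2 = 1)
    (h3 : Zb * Pn * ((X * P2) * (X * P2)) * aR^2 = 1) :
    -(2/(nR-2)) * (Za*P1) * ( (-(2*r)*b^2*X*P2) * e + ((-(2*r)*b^2*X) * ((-r-1) * P3 * (2*b^2))) * yi * yj )
    + (2*nR/(nR-2)^2) * (Zb*Pn) * ((-(2*r)*b^2*X*P2) * yi) * ((-(2*r)*b^2*X*P2) * yj)
    - (2/(nR-2)^2) * (Zb*Pn) * (((-(2*r)*b^2*X*P2))^2 * S) * e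
    = 2*b^2/aR^2 * e := by
  have hZa : Za = Q / (P1 * (X * P2) * aR^2) := by
    rw [eq_div_iff (by exact mul_ne_zero (mul_ne_zero hP1 (mul_ne_zero hX hP2)) (pow_ne_zero 2 ha))]
    linear_combination h1
  have hP3' : P3 = P2 / Q := by
    rw [hZa] at h2
    field_simp at h2
    rw [eq_div_iff hQ0]
    have h2' : (P1*X) * (P3 * Q) = (P1*X) * P2 := by linear_combination (P1*X) * h2
    exact mul_left_cancel₀ (mul_ne_zero hP1 hX) h2'
  have hZb : Zb = 1 / (Pn * ((X * P2) * (X * P2)) * aR^2) := by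
    rw [eq_div_iff (by exact mul_ne_zero (mul_ne_zero hPn (mul_ne_zero (mul_ne_zero hX hP2) (mul_ne_zero hX hP2))) (pow_ne_zero 2 ha))]
    linear_combination h3
  subst hnR
  rw [hZa, hP3', hZb, hQ]
  have h1' : (1:ℝ) + b^2*S ≠ 0 := by rw [← hQ]; exact hQ0
  rw [show (2*r+2-2) = 2*r by ring]
  field_simp
  ring

noncomputable def confHess {n : ℕ} (u : EuclideanSpace ℝ (Fin n) → ℝ)
    (x : EuclideanSpace ℝ (Fin n)) : Matrix (Fin n) (Fin n) ℝ :=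
  Matrix.of fun i j =>
    -(2 / ((n : ℝ) - 2)) * u x ^ (-(((n : ℝ) + 2) / ((n : ℝ) - 2))) *
        fderiv ℝ (fun z => fderiv ℝ u z (EuclideanSpace.single j 1)) x
          (EuclideanSpace.single i 1)
    + (2 * (n : ℝ) / ((n : ℝ) - 2) ^ 2) * u x ^ (-(2 * (n : ℝ) / ((n : ℝ) - 2))) *
        fderiv ℝ u x (EuclideanSpace.single i 1) * fderiv ℝ u x (EuclideanSpace.single j 1)
    - (2 / ((n : ℝ) - 2) ^ 2) * u x ^ (-(2 * (n : ℝ) / ((n : ℝ) - 2))) *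
        (∑ k : Fin n, fderiv ℝ u x (EuclideanSpace.single k 1) ^ 2) *
        (1 : Matrix (Fin n) (Fin n) ℝ) i j

theorem stmt13 {n : ℕ} (hn : 3 ≤ n) (a b : ℝ) (ha : 0 < a) (hb : 0 ≤ b)
    (x0 : EuclideanSpace ℝ (Fin n))
    (u : EuclideanSpace ℝ (Fin n) → ℝ)
    (hu : ∀ x, u x = (a / (1 + b ^ 2 * ‖x - x0‖ ^ 2)) ^ (((n : ℝ) - 2) / 2)) :
    ∀ x, confHess u x = (2 * b ^ 2 / a ^ 2) • (1 : Matrix (Fin n) (Fin n) ℝ) := by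
  intro x
  have hn3 : (3:ℝ) ≤ (n:ℝ) := by exact_mod_cast hn
  have hd : (0:ℝ) < (n:ℝ) - 2 := by linarith
  have hd' : ((n:ℝ) - 2) ≠ 0 := ne_of_gt hd
  set r : ℝ := ((n:ℝ) - 2) / 2 with hrdef
  have hr : 0 < r := div_pos hd two_pos
  have hQpos : ∀ z : EuclideanSpace ℝ (Fin n), (0:ℝ) < 1 + b ^ 2 * ‖z - x0‖ ^ 2 := fun z => by
    positivity
  have hQd : ∀ z : EuclideanSpace ℝ (Fin n),
      HasFDerivAt (fun w : EuclideanSpace ℝ (Fin n) => 1 + b ^ 2 * ‖w - x0‖ ^ 2)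
        ((2 * b ^ 2) • innerSL ℝ (z - x0)) z := by
    intro z
    have h1 : HasFDerivAt (fun w : EuclideanSpace ℝ (Fin n) => w - x0)
        (ContinuousLinearMap.id ℝ _) z := (hasFDerivAt_id z).sub_const x0
    have h2 := (h1.norm_sq.const_mul (b ^ 2)).const_add (1:ℝ)
    refine h2.congr_fderiv ?_
    ext w
    simp [two_smul]
    ring
  have hpow : ∀ (s : ℝ) (z : EuclideanSpace ℝ (Fin n)),
      HasFDerivAt (fun w : EuclideanSpace ℝ (Fin n) => (1 + b ^ 2 * ‖w - x0‖ ^ 2) ^ s)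
        ((s * (1 + b ^ 2 * ‖z - x0‖ ^ 2) ^ (s - 1) * (2 * b ^ 2)) • innerSL ℝ (z - x0)) z := by
    intro s z
    have h := (Real.hasDerivAt_rpow_const (x := 1 + b ^ 2 * ‖z - x0‖ ^ 2) (p := s)
      (Or.inl (hQpos z).ne')).comp_hasFDerivAt z (hQd z)
    rw [smul_smul] at h
    exact h
  have hufun : u = fun z => a ^ r * (1 + b ^ 2 * ‖z - x0‖ ^ 2) ^ (-r) := by
    funext z
    rw [hu z, Real.div_rpow ha.le (hQpos z).le, div_eq_mul_inv,
      ← Real.rpow_neg (hQpos z).le]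
  have hud : ∀ z, HasFDerivAt u
      ((-(2*r) * b ^ 2 * a ^ r * (1 + b ^ 2 * ‖z - x0‖ ^ 2) ^ (-r - 1)) • innerSL ℝ (z - x0)) z := by
    intro z
    rw [hufun]
    have h := (hpow (-r) z).const_mul (a ^ r)
    rw [smul_smul] at h
    refine h.congr_fderiv ?_
    congr 1
    ring
  have happ : ∀ (z) (k : Fin n), fderiv ℝ u z (EuclideanSpace.single k 1)
      = -(2*r) * b ^ 2 * a ^ r * (1 + b ^ 2 * ‖z - x0‖ ^ 2) ^ (-r - 1) * (z - x0) k := by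
    intro z k
    rw [(hud z).fderiv]
    simp [EuclideanSpace.inner_single_right]
  have hcoord : ∀ (z) (k : Fin n), HasFDerivAt (fun w : EuclideanSpace ℝ (Fin n) => (w - x0) k)
      (innerSL ℝ (EuclideanSpace.single k (1:ℝ))) z := by
    intro z k
    have h := (innerSL ℝ (EuclideanSpace.single k (1:ℝ))).hasFDerivAt.comp z
      ((hasFDerivAt_id z).sub_const x0)
    have hfun : (fun w : EuclideanSpace ℝ (Fin n) => (w - x0) k)
        = (⇑(innerSL ℝ (EuclideanSpace.single k (1:ℝ))) ∘ fun w => w - x0) := by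
      funext w
      simp [EuclideanSpace.inner_single_left]
    rw [hfun]
    simpa using h
  -- matrix entries
  ext i j
  have hDf : HasFDerivAt (fun z : EuclideanSpace ℝ (Fin n) =>
        -(2*r) * b ^ 2 * a ^ r * (1 + b ^ 2 * ‖z - x0‖ ^ 2) ^ (-r - 1))
      ((-(2*r) * b ^ 2 * a ^ r * ((-r-1) * (1 + b ^ 2 * ‖x - x0‖ ^ 2) ^ (-r - 1 - 1) * (2 * b ^ 2)))
        • innerSL ℝ (x - x0)) x := by
    have h := (hpow (-r - 1) x).const_mul (-(2*r) * b ^ 2 * a ^ r)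
    rw [smul_smul] at h
    exact h
  have hhess : fderiv ℝ (fun z => fderiv ℝ u z (EuclideanSpace.single j 1)) x (EuclideanSpace.single i 1)
      = (-(2*r) * b ^ 2 * a ^ r * (1 + b ^ 2 * ‖x - x0‖ ^ 2) ^ (-r - 1))
          * (1 : Matrix (Fin n) (Fin n) ℝ) i j
        + (x - x0) j * ((-(2*r) * b ^ 2 * a ^ r *
            ((-r-1) * (1 + b ^ 2 * ‖x - x0‖ ^ 2) ^ (-r - 1 - 1) * (2 * b ^ 2))) * (x - x0) i) := by
    have hfun : (fun z => fderiv ℝ u z (EuclideanSpace.single j 1))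
        = fun z => (-(2*r) * b ^ 2 * a ^ r * (1 + b ^ 2 * ‖z - x0‖ ^ 2) ^ (-r - 1)) * (z - x0) j :=
      funext fun z => happ z j
    rw [hfun, (hDf.fun_mul (hcoord x j)).fderiv]
    simp only [ContinuousLinearMap.add_apply, ContinuousLinearMap.smul_apply, innerSL_apply_apply,
      smul_eq_mul]
    by_cases hij : i = j
    · subst hij
      simp [EuclideanSpace.inner_single_left, EuclideanSpace.inner_single_right,
        EuclideanSpace.single_apply, Matrix.one_apply]
    · simp [EuclideanSpace.inner_single_left, EuclideanSpace.inner_single_right,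
        EuclideanSpace.single_apply, Matrix.one_apply, hij, Ne.symm hij]
  have hsum : (∑ k : Fin n, fderiv ℝ u x (EuclideanSpace.single k 1) ^ 2)
      = (-(2*r) * b ^ 2 * a ^ r * (1 + b ^ 2 * ‖x - x0‖ ^ 2) ^ (-r - 1)) ^ 2
        * ∑ k : Fin n, ((x - x0) k) ^ 2 := by
    rw [Finset.mul_sum]
    refine Finset.sum_congr rfl fun k _ => ?_
    rw [happ x k]; ring
  have hS : ‖x - x0‖ ^ 2 = ∑ k : Fin n, ((x - x0) k) ^ 2 := by
    rw [PiLp.norm_sq_eq_of_L2]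
    exact Finset.sum_congr rfl fun k _ => by rw [Real.norm_eq_abs, sq_abs]
  have hux : u x = a ^ r * (1 + b ^ 2 * ‖x - x0‖ ^ 2) ^ (-r) := by rw [hufun]
  have hQx : (0:ℝ) < 1 + b ^ 2 * ‖x - x0‖ ^ 2 := hQpos x
  have hA1 : (a ^ r * (1 + b ^ 2 * ‖x - x0‖ ^ 2) ^ (-r)) ^ (-(((n:ℝ) + 2) / ((n:ℝ) - 2)))
      = a ^ (-(((n:ℝ) + 2) / 2)) * (1 + b ^ 2 * ‖x - x0‖ ^ 2) ^ (((n:ℝ) + 2) / 2) := by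
    rw [Real.mul_rpow (Real.rpow_nonneg ha.le _) (Real.rpow_nonneg hQx.le _),
      ← Real.rpow_mul ha.le, ← Real.rpow_mul hQx.le,
      show r * (-(((n:ℝ) + 2) / ((n:ℝ) - 2))) = -(((n:ℝ) + 2) / 2) by
        rw [hrdef]; field_simp,
      show (-r) * (-(((n:ℝ) + 2) / ((n:ℝ) - 2))) = ((n:ℝ) + 2) / 2 by
        rw [hrdef]; field_simp]
  have hA2 : (a ^ r * (1 + b ^ 2 * ‖x - x0‖ ^ 2) ^ (-r)) ^ (-(2 * (n:ℝ) / ((n:ℝ) - 2)))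
      = a ^ (-(n:ℝ)) * (1 + b ^ 2 * ‖x - x0‖ ^ 2) ^ ((n:ℝ)) := by
    rw [Real.mul_rpow (Real.rpow_nonneg ha.le _) (Real.rpow_nonneg hQx.le _),
      ← Real.rpow_mul ha.le, ← Real.rpow_mul hQx.le,
      show r * (-(2 * (n:ℝ) / ((n:ℝ) - 2))) = -(n:ℝ) by
        rw [hrdef]; field_simp,
      show (-r) * (-(2 * (n:ℝ) / ((n:ℝ) - 2))) = (n:ℝ) by
        rw [hrdef]; field_simp]
  -- key product identities
  have ea1 : a ^ (-(((n:ℝ) + 2) / 2)) * a ^ r * a ^ (2:ℕ) = 1 := by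
    have he : (-(((n:ℝ) + 2) / 2) + r + ((2:ℕ):ℝ)) = 0 := by rw [hrdef]; push_cast; ring
    rw [← Real.rpow_natCast a 2, ← Real.rpow_add ha, ← Real.rpow_add ha, he, Real.rpow_zero]
  have ea2 : a ^ (-(n:ℝ)) * a ^ r * a ^ r * a ^ (2:ℕ) = 1 := by
    have he : (-(n:ℝ) + r + r + ((2:ℕ):ℝ)) = 0 := by rw [hrdef]; push_cast; ring
    rw [← Real.rpow_natCast a 2, ← Real.rpow_add ha, ← Real.rpow_add ha, ← Real.rpow_add ha, he,
      Real.rpow_zero]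
  have k1 : a ^ (-(((n:ℝ) + 2) / 2)) * ((1 + b ^ 2 * ‖x - x0‖ ^ 2) ^ (((n:ℝ) + 2) / 2))
      * ((a ^ r) * ((1 + b ^ 2 * ‖x - x0‖ ^ 2) ^ (-r - 1))) * a ^ 2
      = 1 + b ^ 2 * ‖x - x0‖ ^ 2 := by
    have hq : ((1 + b ^ 2 * ‖x - x0‖ ^ 2) ^ (((n:ℝ) + 2) / 2))
        * ((1 + b ^ 2 * ‖x - x0‖ ^ 2) ^ (-r - 1)) = 1 + b ^ 2 * ‖x - x0‖ ^ 2 := by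
      rw [← Real.rpow_add hQx, show (((n:ℝ) + 2) / 2 + (-r - 1)) = 1 by rw [hrdef]; ring,
        Real.rpow_one]
    calc a ^ (-(((n:ℝ) + 2) / 2)) * ((1 + b ^ 2 * ‖x - x0‖ ^ 2) ^ (((n:ℝ) + 2) / 2))
        * ((a ^ r) * ((1 + b ^ 2 * ‖x - x0‖ ^ 2) ^ (-r - 1))) * a ^ 2
        = (a ^ (-(((n:ℝ) + 2) / 2)) * a ^ r * a ^ (2:ℕ))
          * (((1 + b ^ 2 * ‖x - x0‖ ^ 2) ^ (((n:ℝ) + 2) / 2))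
            * ((1 + b ^ 2 * ‖x - x0‖ ^ 2) ^ (-r - 1))) := by ring
      _ = 1 + b ^ 2 * ‖x - x0‖ ^ 2 := by rw [ea1, hq, one_mul]
  have k2 : a ^ (-(((n:ℝ) + 2) / 2)) * ((1 + b ^ 2 * ‖x - x0‖ ^ 2) ^ (((n:ℝ) + 2) / 2))
      * ((a ^ r) * ((1 + b ^ 2 * ‖x - x0‖ ^ 2) ^ (-r - 1 - 1))) * a ^ 2 = 1 := by
    have hq : ((1 + b ^ 2 * ‖x - x0‖ ^ 2) ^ (((n:ℝ) + 2) / 2))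
        * ((1 + b ^ 2 * ‖x - x0‖ ^ 2) ^ (-r - 1 - 1)) = 1 := by
      rw [← Real.rpow_add hQx, show (((n:ℝ) + 2) / 2 + (-r - 1 - 1)) = 0 by rw [hrdef]; ring,
        Real.rpow_zero]
    calc a ^ (-(((n:ℝ) + 2) / 2)) * ((1 + b ^ 2 * ‖x - x0‖ ^ 2) ^ (((n:ℝ) + 2) / 2))
        * ((a ^ r) * ((1 + b ^ 2 * ‖x - x0‖ ^ 2) ^ (-r - 1 - 1))) * a ^ 2
        = (a ^ (-(((n:ℝ) + 2) / 2)) * a ^ r * a ^ (2:ℕ))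
          * (((1 + b ^ 2 * ‖x - x0‖ ^ 2) ^ (((n:ℝ) + 2) / 2))
            * ((1 + b ^ 2 * ‖x - x0‖ ^ 2) ^ (-r - 1 - 1))) := by ring
      _ = 1 := by rw [ea1, hq, one_mul]
  have k3 : a ^ (-(n:ℝ)) * ((1 + b ^ 2 * ‖x - x0‖ ^ 2) ^ ((n:ℝ)))
      * (((a ^ r) * ((1 + b ^ 2 * ‖x - x0‖ ^ 2) ^ (-r - 1)))
        * ((a ^ r) * ((1 + b ^ 2 * ‖x - x0‖ ^ 2) ^ (-r - 1)))) * a ^ 2 = 1 := by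
    have hq : ((1 + b ^ 2 * ‖x - x0‖ ^ 2) ^ ((n:ℝ)))
        * ((1 + b ^ 2 * ‖x - x0‖ ^ 2) ^ (-r - 1))
        * ((1 + b ^ 2 * ‖x - x0‖ ^ 2) ^ (-r - 1)) = 1 := by
      rw [← Real.rpow_add hQx, ← Real.rpow_add hQx,
        show ((n:ℝ) + (-r - 1) + (-r - 1)) = 0 by rw [hrdef]; ring, Real.rpow_zero]
    calc a ^ (-(n:ℝ)) * ((1 + b ^ 2 * ‖x - x0‖ ^ 2) ^ ((n:ℝ)))
        * (((a ^ r) * ((1 + b ^ 2 * ‖x - x0‖ ^ 2) ^ (-r - 1)))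
          * ((a ^ r) * ((1 + b ^ 2 * ‖x - x0‖ ^ 2) ^ (-r - 1)))) * a ^ 2
        = (a ^ (-(n:ℝ)) * a ^ r * a ^ r * a ^ (2:ℕ))
          * (((1 + b ^ 2 * ‖x - x0‖ ^ 2) ^ ((n:ℝ)))
            * ((1 + b ^ 2 * ‖x - x0‖ ^ 2) ^ (-r - 1))
            * ((1 + b ^ 2 * ‖x - x0‖ ^ 2) ^ (-r - 1))) := by ring
      _ = 1 := by rw [ea2, hq, one_mul]
  have hQS : (1 + b ^ 2 * ‖x - x0‖ ^ 2) = 1 + b ^ 2 * ∑ k : Fin n, ((x - x0) k) ^ 2 := by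
    rw [hS]
  have hnR : (n:ℝ) = 2 * r + 2 := by rw [hrdef]; ring
  simp only [confHess, Matrix.of_apply, Matrix.smul_apply, smul_eq_mul]
  rw [hhess, happ x i, happ x j, hsum, hux, hA1, hA2]
  have key := aux13 r a b (1 + b ^ 2 * ‖x - x0‖ ^ 2) (∑ k : Fin n, ((x - x0) k) ^ 2)
    ((x - x0) i) ((x - x0) j) ((1 : Matrix (Fin n) (Fin n) ℝ) i j)
    (a ^ (-(((n:ℝ) + 2) / 2))) ((1 + b ^ 2 * ‖x - x0‖ ^ 2) ^ (((n:ℝ) + 2) / 2))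
    (a ^ r) ((1 + b ^ 2 * ‖x - x0‖ ^ 2) ^ (-r - 1)) ((1 + b ^ 2 * ‖x - x0‖ ^ 2) ^ (-r - 1 - 1))
    (a ^ (-(n:ℝ))) ((1 + b ^ 2 * ‖x - x0‖ ^ 2) ^ ((n:ℝ))) ((n:ℝ))
    hr.ne' ha.ne'
    (Real.rpow_pos_of_pos hQx _).ne' (Real.rpow_pos_of_pos ha _).ne'
    (Real.rpow_pos_of_pos hQx _).ne' (Real.rpow_pos_of_pos hQx _).ne' hQx.ne'
    hnR hQS k1 k2 k3
  linear_combination key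
end
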